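/- Let Λ be a 2-dimensional Young diagram. Then for any two corner cells μ ≠ ν of Λ, there exists a precorner cell λ of Λ lying in the 'hook' between them; consequently if Λ has at most two precorner cells then Λ has at most three corner cells. -/

import Mathlib

/-- The hook lemma: between corners `μ`, `ν` with `μ.1 < ν.1` there is a precorner `lam`
with `μ.1 ≤ lam.1 < ν.1` and `ν.2 ≤ lam.2`. -/
lemma hook_aux (Λ : Finset (ℕ × ℕ))
    (hdc : ∀ μ ∈ Λ, ∀ lam : ℕ × ℕ, lam ≤ μ → lam ∈ Λ)
    (μ ν : ℕ × ℕ) (hμΛ : μ ∈ Λ) (hνΛ : ν ∈ Λ)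
    (hμc : ∀ ρ ∈ Λ, μ ≤ ρ → ρ = μ) (hνc : ∀ ρ ∈ Λ, ν ≤ ρ → ρ = ν)
    (h1 : μ.1 < ν.1) :
    ∃ lam ∈ Λ,
      (¬ (∀ ρ ∈ Λ, lam ≤ ρ → ρ = lam)) ∧
      (lam + (1, 0) ∉ Λ ∨ (∀ ρ ∈ Λ, lam + (1, 0) ≤ ρ → ρ = lam + (1, 0))) ∧
      (lam + (0, 1) ∉ Λ ∨ (∀ ρ ∈ Λ, lam + (0, 1) ≤ ρ → ρ = lam + (0, 1))) ∧
      μ.1 ≤ lam.1 ∧ lam.1 < ν.1 ∧ ν.2 ≤ lam.2 := by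
  classical
  have hν2 : ν.2 < μ.2 := by
    by_contra h
    push_neg at h
    have hle : μ ≤ ν := Prod.le_def.2 ⟨h1.le, h⟩
    have := hμc ν hνΛ hle
    rw [this] at h1
    exact lt_irrefl _ h1
  set Cp : ℕ × ℕ → Prop := fun x => ∀ ρ ∈ Λ, x ≤ ρ → ρ = x with hCp
  set T : Finset (ℕ × ℕ) :=
    Λ.filter (fun x => μ.1 ≤ x.1 ∧ ν.2 ≤ x.2 ∧ ¬ Cp x) with hT
  have hpΛ : ((μ.1, ν.2) : ℕ × ℕ) ∈ Λ :=
    hdc μ hμΛ _ (Prod.le_def.2 ⟨le_refl _, hν2.le⟩)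
  have hpnc : ¬ Cp (μ.1, ν.2) := by
    intro h
    have h₁ := h μ hμΛ (Prod.le_def.2 ⟨le_refl _, hν2.le⟩)
    have h₂ := h ν hνΛ (Prod.le_def.2 ⟨h1.le, le_refl _⟩)
    have : μ = ν := h₁.trans h₂.symm
    rw [this] at h1
    exact lt_irrefl _ h1
  have hTne : T.Nonempty :=
    ⟨(μ.1, ν.2), Finset.mem_filter.2 ⟨hpΛ, le_refl _, le_refl _, hpnc⟩⟩
  obtain ⟨lam, hlamM⟩ := Finset.exists_maximal hTne
  have hlamT : lam ∈ T := hlamM.1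
  have hmax : ∀ x ∈ T, ¬ lam < x := fun x hx hlt => hlt.not_ge (hlamM.2 hx hlt.le)
  obtain ⟨hlamΛ, hx1, hx2, hnc⟩ := Finset.mem_filter.1 hlamT
  have hlt1 : lam.1 < ν.1 := by
    by_contra h
    push_neg at h
    have hle : ν ≤ lam := Prod.le_def.2 ⟨h, hx2⟩
    have := hνc lam hlamΛ hle
    rw [this] at hnc
    exact hnc hνc
  refine ⟨lam, hlamΛ, hnc, ?_, ?_, hx1, hlt1, hx2⟩
  · by_cases h : lam + (1, 0) ∈ Λ
    · right
      by_contra hcn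
      refine hmax (lam + (1, 0)) (Finset.mem_filter.2 ⟨h, ?_, ?_, hcn⟩) ?_
      · simp; omega
      · simp; omega
      · refine Prod.lt_iff.2 (Or.inl ⟨?_, ?_⟩) <;> simp
    · exact Or.inl h
  · by_cases h : lam + (0, 1) ∈ Λ
    · right
      by_contra hcn
      refine hmax (lam + (0, 1)) (Finset.mem_filter.2 ⟨h, ?_, ?_, hcn⟩) ?_
      · simp; omega
      · simp; omega
      · refine Prod.lt_iff.2 (Or.inr ⟨?_, ?_⟩) <;> simp
    · exact Or.inl h

lemma corner_fst_injOn (Λ : Finset (ℕ × ℕ)) :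
    ∀ μ ∈ Λ, ∀ ν ∈ Λ, (∀ ρ ∈ Λ, μ ≤ ρ → ρ = μ) → (∀ ρ ∈ Λ, ν ≤ ρ → ρ = ν) →
      μ.1 = ν.1 → μ = ν := by
  intro μ hμ ν hν hμc hνc h
  rcases le_total μ.2 ν.2 with h2 | h2
  · exact (hμc ν hν (Prod.le_def.2 ⟨h.le, h2⟩)).symm
  · exact hνc μ hμ (Prod.le_def.2 ⟨h.ge, h2⟩)

/-- For a 2-dimensional Young diagram `Λ`, between any two distinct corner cells there is a
precorner cell lying in the hook joining them; consequently, if `Λ` has at most two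
precorner cells then it has at most three corner cells. -/
theorem hook_contains_precorner
    (Λ : Finset (ℕ × ℕ))
    (hdc : ∀ μ ∈ Λ, ∀ lam : ℕ × ℕ, lam ≤ μ → lam ∈ Λ) :
    (∀ μ ∈ Λ, ∀ ν ∈ Λ, (∀ ρ ∈ Λ, μ ≤ ρ → ρ = μ) → (∀ ρ ∈ Λ, ν ≤ ρ → ρ = ν) → μ ≠ ν →
      ∃ lam ∈ Λ,
        (¬ (∀ ρ ∈ Λ, lam ≤ ρ → ρ = lam)) ∧
        (lam + (1, 0) ∉ Λ ∨ (∀ ρ ∈ Λ, lam + (1, 0) ≤ ρ → ρ = lam + (1, 0))) ∧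
        (lam + (0, 1) ∉ Λ ∨ (∀ ρ ∈ Λ, lam + (0, 1) ≤ ρ → ρ = lam + (0, 1))) ∧
        min μ.1 ν.1 ≤ lam.1 ∧ min μ.2 ν.2 ≤ lam.2) ∧
    (Set.ncard {lam : ℕ × ℕ | lam ∈ Λ ∧ (¬ (∀ ρ ∈ Λ, lam ≤ ρ → ρ = lam)) ∧
        (lam + (1, 0) ∉ Λ ∨ (∀ ρ ∈ Λ, lam + (1, 0) ≤ ρ → ρ = lam + (1, 0))) ∧
        (lam + (0, 1) ∉ Λ ∨ (∀ ρ ∈ Λ, lam + (0, 1) ≤ ρ → ρ = lam + (0, 1)))} ≤ 2 →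
      Set.ncard {μ : ℕ × ℕ | μ ∈ Λ ∧ ∀ ρ ∈ Λ, μ ≤ ρ → ρ = μ} ≤ 3) := by
  classical
  constructor
  · intro μ hμ ν hν hμc hνc hne
    have hfst : μ.1 ≠ ν.1 := fun h => hne (corner_fst_injOn Λ μ hμ ν hν hμc hνc h)
    rcases lt_or_gt_of_ne hfst with h | h
    · obtain ⟨lam, hl, hnc, hc1, hc2, hA, hB, hC⟩ :=
        hook_aux Λ hdc μ ν hμ hν hμc hνc h
      exact ⟨lam, hl, hnc, hc1, hc2, by omega, by omega⟩
    · obtain ⟨lam, hl, hnc, hc1, hc2, hA, hB, hC⟩ :=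
        hook_aux Λ hdc ν μ hν hμ hνc hμc h
      exact ⟨lam, hl, hnc, hc1, hc2, by omega, by omega⟩
  · intro hP
    set CF : Finset (ℕ × ℕ) := Λ.filter (fun x => ∀ ρ ∈ Λ, x ≤ ρ → ρ = x) with hCF
    set PF : Finset (ℕ × ℕ) := Λ.filter (fun lam =>
      (¬ (∀ ρ ∈ Λ, lam ≤ ρ → ρ = lam)) ∧
      (lam + (1, 0) ∉ Λ ∨ (∀ ρ ∈ Λ, lam + (1, 0) ≤ ρ → ρ = lam + (1, 0))) ∧
      (lam + (0, 1) ∉ Λ ∨ (∀ ρ ∈ Λ, lam + (0, 1) ≤ ρ → ρ = lam + (0, 1)))) with hPF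
    have hCs : {μ : ℕ × ℕ | μ ∈ Λ ∧ ∀ ρ ∈ Λ, μ ≤ ρ → ρ = μ} = ↑CF := by
      ext x; simp [hCF]
    have hPs : {lam : ℕ × ℕ | lam ∈ Λ ∧ (¬ (∀ ρ ∈ Λ, lam ≤ ρ → ρ = lam)) ∧
        (lam + (1, 0) ∉ Λ ∨ (∀ ρ ∈ Λ, lam + (1, 0) ≤ ρ → ρ = lam + (1, 0))) ∧
        (lam + (0, 1) ∉ Λ ∨ (∀ ρ ∈ Λ, lam + (0, 1) ≤ ρ → ρ = lam + (0, 1)))} = ↑PF := by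
      ext x; simp [hPF]
    rw [hCs, Set.ncard_coe_finset]
    rw [hPs, Set.ncard_coe_finset] at hP
    set A : Finset ℕ := CF.image Prod.fst with hA
    set B : Finset ℕ := PF.image Prod.fst with hB
    have hAcard : A.card = CF.card := by
      apply Finset.card_image_of_injOn
      intro x hx y hy hxy
      simp only [hCF, Finset.coe_filter, Set.mem_setOf_eq] at hx hy
      exact corner_fst_injOn Λ x hx.1 y hy.1 hx.2 hy.2 hxy
    have hBcard : B.card ≤ PF.card := Finset.card_image_le
    have main : A.card ≤ B.card + 1 := by
      rcases Finset.eq_empty_or_nonempty A with hAe | hAne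
      · simp [hAe]
      · set M : ℕ := A.max' hAne with hM
        have key : ∀ x ∈ A.erase M, ∃ b ∈ B, x ≤ b ∧ ∀ a ∈ A, x < a → b < a := by
          intro x hx
          obtain ⟨hxne, hxA⟩ := Finset.mem_erase.1 hx
          have hxM : x < M := lt_of_le_of_ne (A.le_max' x hxA) hxne
          set S : Finset ℕ := A.filter (fun a => x < a) with hS
          have hSne : S.Nonempty := ⟨M, Finset.mem_filter.2 ⟨A.max'_mem hAne, hxM⟩⟩
          set n : ℕ := S.min' hSne with hn
          have hnS : n ∈ S := S.min'_mem hSne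
          obtain ⟨hnA, hxn⟩ := Finset.mem_filter.1 hnS
          obtain ⟨μ, hμCF, hμx⟩ := Finset.mem_image.1 hxA
          obtain ⟨ν, hνCF, hνn⟩ := Finset.mem_image.1 hnA
          obtain ⟨hμΛ, hμc⟩ := Finset.mem_filter.1 hμCF
          obtain ⟨hνΛ, hνc⟩ := Finset.mem_filter.1 hνCF
          have h1 : μ.1 < ν.1 := by rw [hμx, hνn]; exact hxn
          obtain ⟨lam, hlΛ, hnc, hc1, hc2, hA1, hA2, hA3⟩ :=
            hook_aux Λ hdc μ ν hμΛ hνΛ hμc hνc h1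
          refine ⟨lam.1, Finset.mem_image.2 ⟨lam,
            Finset.mem_filter.2 ⟨hlΛ, hnc, hc1, hc2⟩, rfl⟩, ?_, ?_⟩
          · omega
          · intro a haA hxa
            have : n ≤ a := S.min'_le a (Finset.mem_filter.2 ⟨haA, hxa⟩)
            omega
        have key' : ∀ x : ℕ, ∃ b : ℕ,
            x ∈ A.erase M → (b ∈ B ∧ x ≤ b ∧ ∀ a ∈ A, x < a → b < a) := by
          intro x
          by_cases hx : x ∈ A.erase M
          · obtain ⟨b, hb1, hb2, hb3⟩ := key x hx
            exact ⟨b, fun _ => ⟨hb1, hb2, hb3⟩⟩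
          · exact ⟨0, fun h => absurd h hx⟩
        choose f hf using key'
        have hcard : (A.erase M).card ≤ B.card := by
          apply Finset.card_le_card_of_injOn f
          · intro x hx
            exact (hf x hx).1
          · intro x hx y hy hxy
            simp only [Finset.coe_erase, Set.mem_diff, Finset.mem_coe] at hx hy
            have hx' : x ∈ A.erase M := Finset.mem_erase.2 ⟨by simpa using hx.2, hx.1⟩
            have hy' : y ∈ A.erase M := Finset.mem_erase.2 ⟨by simpa using hy.2, hy.1⟩
            rcases lt_trichotomy x y with h | h | h
            · have h1 := (hf x hx').2.2 y (Finset.mem_erase.1 hy').2 h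
              have h2 := (hf y hy').2.1
              omega
            · exact h
            · have h1 := (hf y hy').2.2 x (Finset.mem_erase.1 hx').2 h
              have h2 := (hf x hx').2.1
              omega
        have hMA : M ∈ A := A.max'_mem hAne
        have := Finset.card_erase_of_mem hMA
        have hA1 : 1 ≤ A.card := Finset.card_pos.2 hAne
        omega
    omega
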